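/- Let α₀ ≠ 0 and β₀ be real numbers. There is no nonempty open set U ⊆ (0,∞) × ℝ and C¹ functions P, Θ : U → ℝ such that on U: (i) α₀·Θ_s = 0 and α₀·ρ²·Θ_ρ − β₀ = 0 (tangency of the vector field A = α₀∂_s + β₀∂_p to the state, i.e. vanishing of the restriction of ι_AΩ), and (ii) the admissibility condition Θ_s·P_ρ − ρ²·Θ_ρ² > 0 holds. Consequently, there are no admissible thermodynamic states for the Euler system on a plane that admit a two-dimensional non-commutative symmetry algebra. -/
import Mathlib


/-- Partial derivative with respect to the first variable (the density `ρ`). -/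
noncomputable def pderivR (f : ℝ → ℝ → ℝ) (r s : ℝ) : ℝ := deriv (fun x => f x s) r

/-- Partial derivative with respect to the second variable (the entropy `s`). -/
noncomputable def pderivS (f : ℝ → ℝ → ℝ) (r s : ℝ) : ℝ := deriv (fun y => f r y) s

/-- There is no admissible thermodynamic state tangent to `A = α₀∂_s + β₀∂_p` with
`α₀ ≠ 0`: no thermodynamic states of the Euler system on a plane admit a two-dimensional
non-commutative symmetry algebra. -/
theorem stmt_9 (a0 b0 : ℝ) (ha : a0 ≠ 0) :
    ¬ ∃ (U : Set (ℝ × ℝ)) (P Θ : ℝ → ℝ → ℝ),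
      IsOpen U ∧ U.Nonempty ∧ U ⊆ {q : ℝ × ℝ | 0 < q.1} ∧
      ContDiffOn ℝ 1 (Function.uncurry P) U ∧
      ContDiffOn ℝ 1 (Function.uncurry Θ) U ∧
      (∀ q ∈ U,
        a0 * pderivS Θ q.1 q.2 = 0 ∧
        a0 * q.1 ^ 2 * pderivR Θ q.1 q.2 - b0 = 0 ∧
        0 < pderivS Θ q.1 q.2 * pderivR P q.1 q.2
            - q.1 ^ 2 * (pderivR Θ q.1 q.2) ^ 2) := by
  rintro ⟨U, P, Θ, -, ⟨q, hq⟩, -, -, -, h⟩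
  obtain ⟨h1, -, h3⟩ := h q hq
  have hs : pderivS Θ q.1 q.2 = 0 := by
    rcases mul_eq_zero.mp h1 with h | h
    · exact absurd h ha
    · exact h
  rw [hs, zero_mul, zero_sub] at h3
  have : 0 ≤ q.1 ^ 2 * (pderivR Θ q.1 q.2) ^ 2 := by positivity
  linarith
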